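/- The quotient space of 2×2 real positive semidefinite symmetric matrices with rational nullspace, under the GL_2(ℤ)-action Q ↦ XᵀQX, is not Hausdorff. Specifically, the sequences X_n = [[1, 1/n],[1/n, 1/n²]] and Y_n = [[1/n², 0],[0,0]] satisfy X_n ≡ Y_n under GL_2(ℤ)-equivalence for every n ≥ 1, while X_n → [[1,0],[0,0]] and Y_n → [[0,0],[0,0]], and [[1,0],[0,0]] is not GL_2(ℤ)-equivalent to the zero matrix. -/

import Mathlib

open Filter Topology Matrix

/-- A symmetric real matrix has rational nullspace if its kernel is spanned by its vectors
with rational coordinates. -/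
def RatNullspace (Q : Matrix (Fin 2) (Fin 2) ℝ) : Prop :=
  LinearMap.ker Q.mulVecLin = Submodule.span ℝ
    ((LinearMap.ker Q.mulVecLin : Set (Fin 2 → ℝ)) ∩ {x | ∀ i, ∃ q : ℚ, x i = (q : ℝ)})

/-- The space `S̃²_{≥0}` of 2×2 positive semidefinite symmetric real matrices with rational
nullspace. -/
def PSDrat : Type :=
  {Q : Matrix (Fin 2) (Fin 2) ℝ // Q.IsSymm ∧ Q.PosSemidef ∧ RatNullspace Q}

instance : TopologicalSpace PSDrat :=
  instTopologicalSpaceSubtype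

/-- `GL₂(ℤ)`-equivalence `Q ↦ XᵀQX` on `S̃²_{≥0}`. -/
def glEquiv (Q Q' : PSDrat) : Prop :=
  ∃ M : Matrix (Fin 2) (Fin 2) ℤ, IsUnit M.det ∧
    (M.map (Int.cast : ℤ → ℝ))ᵀ * Q.1 * (M.map (Int.cast : ℤ → ℝ)) = Q'.1

/- ### Auxiliary lemmas -/

lemma aux_part1 (n : ℕ) (hn : 1 ≤ n) : ∃ M : Matrix (Fin 2) (Fin 2) ℤ, IsUnit M.det ∧
      (M.map (Int.cast : ℤ → ℝ))ᵀ * !![1, 1/(n:ℝ); 1/(n:ℝ), 1/(n:ℝ)^2]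
          * (M.map (Int.cast : ℤ → ℝ))
        = !![1/(n:ℝ)^2, 0; 0, 0] := by
  have hn0 : (n:ℝ) ≠ 0 := Nat.cast_ne_zero.2 (by omega)
  refine ⟨!![0, -1; 1, (n:ℤ)], ?_, ?_⟩
  · simp [Matrix.det_fin_two_of]
  · ext i j
    fin_cases i <;> fin_cases j <;>
      simp [Matrix.mul_apply, Fin.sum_univ_two, Matrix.map_apply] <;>
      field_simp <;> ring

lemma aux_part2 : Tendsto (fun n : ℕ => !![1, 1/(n:ℝ); 1/(n:ℝ), 1/(n:ℝ)^2]) atTop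
    (𝓝 !![1, 0; 0, 0]) := by
  have h : Tendsto (fun n : ℕ => 1/(n:ℝ)) atTop (𝓝 0) := tendsto_one_div_atTop_nhds_zero_nat
  have h2 : Tendsto (fun n : ℕ => 1/(n:ℝ)^2) atTop (𝓝 0) := by
    simpa [one_div, sq, mul_inv] using h.mul h
  refine tendsto_pi_nhds.2 fun i => tendsto_pi_nhds.2 fun j => ?_
  fin_cases i <;> fin_cases j <;> simp <;> first
    | exact tendsto_const_nhds
    | simpa using h
    | simpa [div_pow] using h2

lemma aux_part3 : Tendsto (fun n : ℕ => !![1/(n:ℝ)^2, 0; 0, 0]) atTop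
      (𝓝 (0 : Matrix (Fin 2) (Fin 2) ℝ)) := by
  have h : Tendsto (fun n : ℕ => 1/(n:ℝ)) atTop (𝓝 0) := tendsto_one_div_atTop_nhds_zero_nat
  have h2 : Tendsto (fun n : ℕ => 1/(n:ℝ)^2) atTop (𝓝 0) := by
    simpa [one_div, sq, mul_inv] using h.mul h
  refine tendsto_pi_nhds.2 fun i => tendsto_pi_nhds.2 fun j => ?_
  fin_cases i <;> fin_cases j <;> simp <;> first
    | exact tendsto_const_nhds
    | simpa [div_pow] using h2

lemma aux_part4 : ¬ ∃ M : Matrix (Fin 2) (Fin 2) ℤ, IsUnit M.det ∧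
      (M.map (Int.cast : ℤ → ℝ))ᵀ * !![1, 0; 0, 0] * (M.map (Int.cast : ℤ → ℝ)) = 0 := by
  rintro ⟨M, hdet, h⟩
  have h00 := congrFun (congrFun h 0) 0
  have h11 := congrFun (congrFun h 1) 1
  simp [Matrix.mul_apply, Fin.sum_univ_two, Matrix.map_apply] at h00 h11
  have e0 : M 0 0 = 0 := by
    exact_mod_cast pow_eq_zero_iff (n := 2) (by norm_num) |>.1 (by nlinarith [h00])
  have e1 : M 0 1 = 0 := by
    exact_mod_cast pow_eq_zero_iff (n := 2) (by norm_num) |>.1 (by nlinarith [h11])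
  rw [Matrix.det_fin_two, e0, e1] at hdet
  simp at hdet

lemma ratNull_of_span (Q : Matrix (Fin 2) (Fin 2) ℝ) (v : Fin 2 → ℝ)
    (hv : ∀ i, ∃ q : ℚ, v i = (q : ℝ))
    (h : LinearMap.ker Q.mulVecLin = Submodule.span ℝ {v}) : RatNullspace Q := by
  refine le_antisymm ?_ ?_
  · rw [h]
    refine Submodule.span_le.2 (Set.singleton_subset_iff.2 (Submodule.subset_span ?_))
    exact ⟨Submodule.mem_span_singleton_self v, hv⟩
  · calc Submodule.span ℝ _ ≤ Submodule.span ℝ (LinearMap.ker Q.mulVecLin : Set (Fin 2 → ℝ)) :=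
        Submodule.span_mono Set.inter_subset_left
      _ = LinearMap.ker Q.mulVecLin := Submodule.span_eq _

lemma hrat01 : ∀ i, ∃ q : ℚ, (![(0:ℝ), 1]) i = (q : ℝ) := by
  intro i
  fin_cases i
  · exact ⟨0, by norm_num⟩
  · exact ⟨1, by norm_num⟩

lemma memX (n : ℕ) :
    (!![1, 1/(n+1:ℝ); 1/(n+1:ℝ), 1/(n+1:ℝ)^2]).IsSymm ∧
    (!![1, 1/(n+1:ℝ); 1/(n+1:ℝ), 1/(n+1:ℝ)^2]).PosSemidef ∧
    RatNullspace !![1, 1/(n+1:ℝ); 1/(n+1:ℝ), 1/(n+1:ℝ)^2] := by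
  have hn : (n+1:ℝ) ≠ 0 := by positivity
  have hrat : ∀ i, ∃ q : ℚ, (![-1, (n+1:ℝ)]) i = (q : ℝ) := by
    intro i
    fin_cases i
    · exact ⟨-1, by norm_num⟩
    · exact ⟨(n:ℚ)+1, by push_cast; norm_num⟩
  have hinv : ((n+1:ℝ)^2)⁻¹ = ((n+1:ℝ)⁻¹)^2 := by rw [← inv_pow]
  refine ⟨?_, Matrix.posSemidef_iff_dotProduct_mulVec.2 ⟨?_, ?_⟩, ratNull_of_span _ ![-1, (n+1:ℝ)] hrat ?_⟩
  · ext i j; fin_cases i <;> fin_cases j <;> simp [Matrix.IsSymm]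
  · ext i j; fin_cases i <;> fin_cases j <;> simp [Matrix.IsHermitian]
  · intro x
    simp only [dotProduct, Matrix.mulVec, Fin.sum_univ_two, Matrix.of_apply,
      Matrix.cons_val', Matrix.cons_val_zero, Matrix.cons_val_one, Matrix.head_cons,
      Matrix.empty_val', Matrix.cons_val_fin_one, Matrix.head_fin_const, one_div, hinv,
      Pi.star_apply, star_trivial, RCLike.re_to_real, one_mul]
    nlinarith [sq_nonneg (x 0 + (n+1:ℝ)⁻¹ * x 1)]
  · refine le_antisymm (fun x hx => ?_) ?_
    · rw [LinearMap.mem_ker] at hx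
      have h0 := congrFun hx 0
      simp only [Matrix.mulVecLin_apply, Matrix.mulVec, dotProduct, Fin.sum_univ_two,
        Matrix.of_apply, Matrix.cons_val', Matrix.cons_val_zero, Matrix.cons_val_one, Matrix.head_cons,
        Matrix.empty_val', Matrix.cons_val_fin_one, Matrix.head_fin_const, one_mul,
        one_div, Pi.zero_apply] at h0
      field_simp at h0
      rw [Submodule.mem_span_singleton]
      refine ⟨-x 0, ?_⟩
      funext i
      fin_cases i
      · simp
      · show -x 0 * (↑n + 1) = x 1
        linarith
    · rw [Submodule.span_le, Set.singleton_subset_iff, SetLike.mem_coe, LinearMap.mem_ker]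
      funext i
      fin_cases i <;>
        simp [Matrix.mulVecLin_apply, Matrix.mulVec, dotProduct, Fin.sum_univ_two] <;>
        field_simp <;> ring

lemma ker01 (c : ℝ) (hc : c ≠ 0) :
    LinearMap.ker (!![c, 0; 0, (0:ℝ)]).mulVecLin = Submodule.span ℝ {![(0:ℝ), 1]} := by
  refine le_antisymm (fun x hx => ?_) ?_
  · rw [LinearMap.mem_ker] at hx
    have h0 := congrFun hx 0
    simp only [Matrix.mulVecLin_apply, Matrix.mulVec, dotProduct, Fin.sum_univ_two,
      Matrix.of_apply, Matrix.cons_val', Matrix.cons_val_zero, Matrix.cons_val_one,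
      Matrix.head_cons, Matrix.empty_val', Matrix.cons_val_fin_one, Matrix.head_fin_const,
      Pi.zero_apply, zero_mul, add_zero, mul_eq_zero] at h0
    have hx0 : x 0 = 0 := h0.resolve_left hc
    rw [Submodule.mem_span_singleton]
    refine ⟨x 1, ?_⟩
    funext i
    fin_cases i <;> simp [hx0]
  · rw [Submodule.span_le, Set.singleton_subset_iff, SetLike.mem_coe, LinearMap.mem_ker]
    funext i
    fin_cases i <;>
      simp [Matrix.mulVecLin_apply, Matrix.mulVec, dotProduct, Fin.sum_univ_two]

lemma psd_c0 (c : ℝ) (hc : 0 ≤ c) : (!![c, 0; 0, (0:ℝ)]).PosSemidef := by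
  rw [Matrix.posSemidef_iff_dotProduct_mulVec]
  constructor
  · ext i j; fin_cases i <;> fin_cases j <;> simp [Matrix.IsHermitian]
  · intro x
    simp only [dotProduct, Matrix.mulVec, Fin.sum_univ_two, Matrix.of_apply,
      Matrix.cons_val', Matrix.cons_val_zero, Matrix.cons_val_one, Matrix.head_cons,
      Matrix.empty_val', Matrix.cons_val_fin_one, Matrix.head_fin_const, Pi.star_apply,
      star_trivial, RCLike.re_to_real, zero_mul, add_zero, mul_zero]
    nlinarith [sq_nonneg (x 0)]

lemma mem_c0 (c : ℝ) (hc : 0 < c) :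
    (!![c, 0; 0, (0:ℝ)]).IsSymm ∧ (!![c, 0; 0, (0:ℝ)]).PosSemidef ∧
      RatNullspace !![c, 0; 0, (0:ℝ)] := by
  refine ⟨?_, psd_c0 c hc.le, ratNull_of_span _ ![0, 1] hrat01 (ker01 c hc.ne')⟩
  ext i j; fin_cases i <;> fin_cases j <;> simp [Matrix.IsSymm]

lemma mem_zero : (0 : Matrix (Fin 2) (Fin 2) ℝ).IsSymm ∧
    (0 : Matrix (Fin 2) (Fin 2) ℝ).PosSemidef ∧ RatNullspace 0 := by
  refine ⟨by simp [Matrix.IsSymm], Matrix.PosSemidef.zero, ?_⟩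
  unfold RatNullspace
  have hker : LinearMap.ker (0 : Matrix (Fin 2) (Fin 2) ℝ).mulVecLin = ⊤ := by
    rw [eq_top_iff]
    intro x _
    simp [LinearMap.mem_ker]
  rw [hker]
  refine le_antisymm (fun x _ => ?_) le_top
  have hx : x = x 0 • ![(1:ℝ), 0] + x 1 • ![(0:ℝ), 1] := by
    funext i; fin_cases i <;> simp
  rw [hx]
  refine add_mem (Submodule.smul_mem _ _ (Submodule.subset_span ⟨trivial, ?_⟩))
    (Submodule.smul_mem _ _ (Submodule.subset_span ⟨trivial, ?_⟩))
  · intro i; fin_cases i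
    · exact ⟨1, by norm_num⟩
    · exact ⟨0, by norm_num⟩
  · exact hrat01

/-- `Q = 0` is invariant under `glEquiv`. -/
lemma zero_resp : ∀ a b : PSDrat, glEquiv a b → (a.1 = 0) = (b.1 = 0) := by
  rintro a b ⟨M, hM, h⟩
  set N := M.map (Int.cast : ℤ → ℝ) with hN
  have hdet : IsUnit N.det := by
    have : N.det = ((M.det : ℤ) : ℝ) := (RingHom.map_det (Int.castRingHom ℝ) M).symm
    rw [this]
    exact hM.map (Int.castRingHom ℝ)
  have hdetT : IsUnit (Nᵀ).det := by rwa [Matrix.det_transpose]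
  apply propext
  constructor
  · intro h0
    rw [h0] at h
    simpa using h.symm
  · intro h0
    rw [h0] at h
    have := congrArg (fun B => (Nᵀ)⁻¹ * B * N⁻¹) h
    simp only [Matrix.mul_zero, Matrix.zero_mul] at this
    calc a.1 = ((Nᵀ)⁻¹ * Nᵀ) * a.1 * (N * N⁻¹) := by
          rw [Matrix.nonsing_inv_mul _ hdetT, Matrix.mul_nonsing_inv _ hdet]
          simp
      _ = (Nᵀ)⁻¹ * (Nᵀ * a.1 * N) * N⁻¹ := by simp only [Matrix.mul_assoc]
      _ = 0 := this

theorem quotient_not_hausdorff :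
    (∀ n : ℕ, 1 ≤ n → ∃ M : Matrix (Fin 2) (Fin 2) ℤ, IsUnit M.det ∧
      (M.map (Int.cast : ℤ → ℝ))ᵀ * !![1, 1/(n:ℝ); 1/(n:ℝ), 1/(n:ℝ)^2]
          * (M.map (Int.cast : ℤ → ℝ))
        = !![1/(n:ℝ)^2, 0; 0, 0]) ∧
    Tendsto (fun n : ℕ => !![1, 1/(n:ℝ); 1/(n:ℝ), 1/(n:ℝ)^2]) atTop (𝓝 !![1, 0; 0, 0]) ∧
    Tendsto (fun n : ℕ => !![1/(n:ℝ)^2, 0; 0, 0]) atTop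
      (𝓝 (0 : Matrix (Fin 2) (Fin 2) ℝ)) ∧
    (¬ ∃ M : Matrix (Fin 2) (Fin 2) ℤ, IsUnit M.det ∧
      (M.map (Int.cast : ℤ → ℝ))ᵀ * !![1, 0; 0, 0] * (M.map (Int.cast : ℤ → ℝ)) = 0) ∧
    ¬ T2Space (Quot glEquiv) := by
  refine ⟨aux_part1, aux_part2, aux_part3, aux_part4, ?_⟩
  intro hT2
  haveI := hT2
  -- the shifted sequences, as elements of `PSDrat`
  have hcast : ∀ n : ℕ, ((n+1 : ℕ) : ℝ) = (n : ℝ) + 1 := by intro n; push_cast; ring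
  set X : ℕ → PSDrat := fun n => ⟨!![1, 1/(n+1:ℝ); 1/(n+1:ℝ), 1/(n+1:ℝ)^2], memX n⟩ with hX
  set Y : ℕ → PSDrat := fun n => ⟨!![1/(n+1:ℝ)^2, 0; 0, 0],
    mem_c0 _ (by positivity)⟩ with hY
  set A : PSDrat := ⟨!![1, 0; 0, 0], mem_c0 1 one_pos⟩ with hA
  set Z : PSDrat := ⟨0, mem_zero⟩ with hZ
  have hXY : ∀ n, glEquiv (X n) (Y n) := by
    intro n
    obtain ⟨M, hM, h⟩ := aux_part1 (n+1) (by omega)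
    exact ⟨M, hM, by rw [hcast n] at h; exact h⟩
  -- convergence in `PSDrat`
  have hXA : Tendsto X atTop (𝓝 A) := by
    refine tendsto_subtype_rng.2 ?_
    have := aux_part2.comp (tendsto_add_atTop_nat 1)
    simpa [hX, hA, Function.comp_def, Nat.cast_add, Nat.cast_one] using this
  have hYZ : Tendsto Y atTop (𝓝 Z) := by
    refine tendsto_subtype_rng.2 ?_
    have := aux_part3.comp (tendsto_add_atTop_nat 1)
    simpa [hY, hZ, Function.comp_def, Nat.cast_add, Nat.cast_one] using this
  -- pass to the quotient
  have hq : Continuous (Quot.mk glEquiv) := continuous_quot_mk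
  have h1 : Tendsto (fun n => Quot.mk glEquiv (X n)) atTop (𝓝 (Quot.mk glEquiv A)) :=
    (hq.tendsto A).comp hXA
  have h2 : Tendsto (fun n => Quot.mk glEquiv (X n)) atTop (𝓝 (Quot.mk glEquiv Z)) := by
    have h2' : Tendsto (fun n => Quot.mk glEquiv (Y n)) atTop (𝓝 (Quot.mk glEquiv Z)) :=
      (hq.tendsto Z).comp hYZ
    refine h2'.congr fun n => ?_
    exact (Quot.sound (hXY n)).symm
  have heq : Quot.mk glEquiv A = Quot.mk glEquiv Z := tendsto_nhds_unique h1 h2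
  have hlift := congrArg (Quot.lift (fun Q : PSDrat => Q.1 = 0) zero_resp) heq
  have h' : (A.1 = 0) = (Z.1 = 0) := hlift
  have hA0 : A.1 = 0 := by rw [h']
  have := congrFun (congrFun hA0 0) 0
  simp [hA] at this
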